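/- (Theorem 1, case p = 0.) Let f : ℝⁿ → ℝⁿ be continuously differentiable and 0-dominant with rate λ ≥ 0, i.e., there exist a real symmetric positive definite n×n matrix P and ε > 0 such that Df(ξ)ᵀ P + P Df(ξ) + 2λ P ⪯ −ε I for all ξ ∈ ℝⁿ. Then every bounded solution x : [0,∞) → ℝⁿ of ξ' = f(ξ) converges as t → ∞ to a point ξ_e with f(ξ_e) = 0, and f has at most one zero; hence all bounded solutions converge to the same unique fixed point. -/

import Mathlib

open Matrix Filter

section Helpers

lemma hasDerivAt_dot_mulVec' {n : ℕ} (P : Matrix (Fin n) (Fin n) ℝ) (v : Fin n → ℝ)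
    {w : ℝ → Fin n → ℝ} {w' : Fin n → ℝ} {t : ℝ} (hw : HasDerivAt w w' t) :
    HasDerivAt (fun s => v ⬝ᵥ P.mulVec (w s)) (v ⬝ᵥ P.mulVec w') t := by
  have h1 : ∀ i, HasDerivAt (fun s => w s i) (w' i) t := fun i => hasDerivAt_pi.1 hw i
  have : HasDerivAt (fun s => ∑ i, v i * ∑ j, P i j * w s j)
      (∑ i, v i * ∑ j, P i j * w' j) t := by
    refine HasDerivAt.fun_sum fun i _ => ?_
    exact ((HasDerivAt.fun_sum fun j _ => (h1 j).const_mul (P i j)).const_mul (v i))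
  simpa [dotProduct, Matrix.mulVec] using this

lemma hasDerivAt_quadForm' {n : ℕ} (P : Matrix (Fin n) (Fin n) ℝ)
    {u : ℝ → Fin n → ℝ} {u' : Fin n → ℝ} {t : ℝ} (hu : HasDerivAt u u' t) :
    HasDerivAt (fun s => (u s) ⬝ᵥ P.mulVec (u s))
      (u' ⬝ᵥ P.mulVec (u t) + (u t) ⬝ᵥ P.mulVec u') t := by
  have h1 : ∀ i, HasDerivAt (fun s => u s i) (u' i) t := fun i => hasDerivAt_pi.1 hu i
  have : HasDerivAt (fun s => ∑ i, u s i * ∑ j, P i j * u s j)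
      (∑ i, (u' i * ∑ j, P i j * u t j + u t i * ∑ j, P i j * u' j)) t := by
    refine HasDerivAt.fun_sum fun i _ => ?_
    exact (h1 i).mul (HasDerivAt.fun_sum fun j _ => (h1 j).const_mul (P i j))
  simpa [dotProduct, Matrix.mulVec, Finset.sum_add_distrib] using this

lemma posdef_transpose_eq {n : ℕ} {P : Matrix (Fin n) (Fin n) ℝ} (hP : P.PosDef) : Pᵀ = P := by
  have := hP.1
  rw [← Matrix.conjTranspose_eq_transpose_of_trivial]; exact this

lemma posdef_dot_symm {n : ℕ} {P : Matrix (Fin n) (Fin n) ℝ} (hP : P.PosDef) (u w : Fin n → ℝ) :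
    w ⬝ᵥ P.mulVec u = u ⬝ᵥ P.mulVec w := by
  have h1 : w ᵥ* P = P *ᵥ w := by
    conv_lhs => rw [← posdef_transpose_eq hP]
    rw [Matrix.vecMul_transpose]
  rw [Matrix.dotProduct_mulVec, h1, dotProduct_comm]

lemma dot_self_nonneg' {n : ℕ} (v : Fin n → ℝ) : 0 ≤ v ⬝ᵥ v :=
  Finset.sum_nonneg fun _ _ => mul_self_nonneg _

lemma dot_self_pos' {n : ℕ} {v : Fin n → ℝ} (hv : v ≠ 0) : 0 < v ⬝ᵥ v :=
  lt_of_le_of_ne (dot_self_nonneg' v) (fun h => hv (dotProduct_self_eq_zero.mp h.symm))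

lemma coord_sq_le_dot' {n : ℕ} (v : Fin n → ℝ) (i : Fin n) : v i * v i ≤ v ⬝ᵥ v :=
  Finset.single_le_sum (f := fun j => v j * v j) (fun _ _ => mul_self_nonneg _)
    (Finset.mem_univ i)

lemma quad_scale' {n : ℕ} (P : Matrix (Fin n) (Fin n) ℝ) (c : ℝ) (v : Fin n → ℝ) :
    (c • v) ⬝ᵥ P.mulVec (c • v) = c * c * (v ⬝ᵥ P.mulVec v) := by
  rw [Matrix.mulVec_smul, smul_dotProduct, dotProduct_smul]
  simp [mul_assoc]

lemma quad_bounds' {n : ℕ} (hn : 0 < n) (P : Matrix (Fin n) (Fin n) ℝ) (hP : P.PosDef) :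
    ∃ m M : ℝ, 0 < m ∧ 0 < M ∧ ∀ v : Fin n → ℝ,
      m * (v ⬝ᵥ v) ≤ v ⬝ᵥ P.mulVec v ∧ v ⬝ᵥ P.mulVec v ≤ M * (v ⬝ᵥ v) := by
  have hQ0 : Continuous fun v : Fin n → ℝ => v ⬝ᵥ v := by
    unfold dotProduct
    exact continuous_finset_sum _ fun i _ => (continuous_apply i).mul (continuous_apply i)
  have hQ : Continuous fun v : Fin n → ℝ => v ⬝ᵥ P.mulVec v := by
    unfold dotProduct Matrix.mulVec
    refine continuous_finset_sum _ fun i _ => (continuous_apply i).mul ?_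
    exact continuous_finset_sum _ fun j _ => continuous_const.mul (continuous_apply j)
  set S : Set (Fin n → ℝ) := {v | v ⬝ᵥ v = 1} with hS
  have hclosed : IsClosed S := isClosed_singleton.preimage hQ0
  have hsub : S ⊆ Metric.closedBall 0 1 := by
    intro v hv
    rw [Metric.mem_closedBall, dist_zero_right]
    rw [pi_norm_le_iff_of_nonneg zero_le_one]
    intro i
    rw [Real.norm_eq_abs, abs_le_one_iff_mul_self_le_one]
    calc v i * v i ≤ v ⬝ᵥ v := coord_sq_le_dot' v i
    _ = 1 := hv
  have hcomp : IsCompact S :=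
    (isCompact_closedBall (0 : Fin n → ℝ) 1).of_isClosed_subset hclosed hsub
  have hne : S.Nonempty := by
    refine ⟨Pi.single ⟨0, hn⟩ 1, ?_⟩
    simp [hS, dotProduct, Pi.single_apply]
  obtain ⟨vm, hvmS, hmin⟩ := hcomp.exists_isMinOn hne hQ.continuousOn
  obtain ⟨vM, hvMS, hmax⟩ := hcomp.exists_isMaxOn hne hQ.continuousOn
  have hS_pos : ∀ v ∈ S, 0 < v ⬝ᵥ P.mulVec v := by
    intro v hv
    have hv0 : v ≠ 0 := by
      intro h; rw [h] at hv; simp [hS] at hv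
    simpa using hP.dotProduct_mulVec_pos hv0
  refine ⟨vm ⬝ᵥ P.mulVec vm, vM ⬝ᵥ P.mulVec vM, hS_pos vm hvmS, hS_pos vM hvMS, fun v => ?_⟩
  rcases eq_or_ne v 0 with rfl | hv0
  · simp
  · have hr : 0 < v ⬝ᵥ v := dot_self_pos' hv0
    set r := v ⬝ᵥ v with hrdef
    set c := (Real.sqrt r)⁻¹ with hcdef
    have hsq : Real.sqrt r * Real.sqrt r = r := Real.mul_self_sqrt hr.le
    have hsqpos : 0 < Real.sqrt r := Real.sqrt_pos.mpr hr
    have hcc : c * c * r = 1 := by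
      rw [hcdef, ← mul_inv, hsq, inv_mul_cancel₀ hr.ne']
    have hwS : c • v ∈ S := by
      show (c • v) ⬝ᵥ (c • v) = 1
      rw [smul_dotProduct, dotProduct_smul]
      simpa [smul_eq_mul, mul_assoc] using hcc
    have hmin' := (isMinOn_iff.mp hmin) _ hwS
    have hmax' := (isMaxOn_iff.mp hmax) _ hwS
    rw [quad_scale'] at hmin' hmax'
    have e1 : c * c * (v ⬝ᵥ P.mulVec v) * r = v ⬝ᵥ P.mulVec v := by
      calc c * c * (v ⬝ᵥ P.mulVec v) * r = (c * c * r) * (v ⬝ᵥ P.mulVec v) := by ring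
      _ = v ⬝ᵥ P.mulVec v := by rw [hcc, one_mul]
    constructor
    · have := mul_le_mul_of_nonneg_right hmin' hr.le
      rw [e1] at this
      linarith
    · have := mul_le_mul_of_nonneg_right hmax' hr.le
      rw [e1] at this
      linarith

end Helpers

/-- The Jacobian matrix of a vector field `f : ℝⁿ → ℝⁿ` at a point `ξ`. -/
noncomputable def jacobianMatrix {n : ℕ} (f : (Fin n → ℝ) → (Fin n → ℝ)) (ξ : Fin n → ℝ) :
    Matrix (Fin n) (Fin n) ℝ :=
  Matrix.of fun i j => fderiv ℝ f ξ (Pi.single j 1) i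

lemma jac_mulVec' {n : ℕ} (f : (Fin n → ℝ) → (Fin n → ℝ)) (ξ v : Fin n → ℝ) :
    (jacobianMatrix f ξ).mulVec v = fderiv ℝ f ξ v := by
  have hv : v = ∑ j, v j • (Pi.single j 1 : Fin n → ℝ) := by
    ext k
    simp [Pi.single_apply, Finset.sum_apply]
  funext i
  conv_rhs => rw [hv]
  rw [map_sum]
  simp [Matrix.mulVec, dotProduct, jacobianMatrix, Finset.sum_apply, mul_comm]

lemma key_increment {n : ℕ} (f : (Fin n → ℝ) → (Fin n → ℝ)) (hf : ContDiff ℝ 1 f)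
    (P : Matrix (Fin n) (Fin n) ℝ) (hP : P.PosDef)
    (lam ε : ℝ) (hlam : 0 ≤ lam) (hε : 0 < ε)
    (hLMI : ∀ ξ : Fin n → ℝ, ∀ v : Fin n → ℝ,
      v ⬝ᵥ (((jacobianMatrix f ξ)ᵀ * P + P * jacobianMatrix f ξ +
        (2 * lam) • P).mulVec v) ≤ -ε * (v ⬝ᵥ v))
    (a b : Fin n → ℝ) :
    2 * ((a - b) ⬝ᵥ P.mulVec (f a - f b)) ≤ -ε * ((a - b) ⬝ᵥ (a - b)) := by
  set v := a - b with hvdef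
  have hpt : ∀ ξ : Fin n → ℝ,
      2 * (v ⬝ᵥ P.mulVec ((jacobianMatrix f ξ).mulVec v)) ≤ -ε * (v ⬝ᵥ v) := by
    intro ξ
    have h := hLMI ξ v
    set J := jacobianMatrix f ξ
    have e1 : v ⬝ᵥ ((Jᵀ * P + P * J + (2*lam) • P).mulVec v)
        = 2 * (v ⬝ᵥ P.mulVec (J.mulVec v)) + (2*lam) * (v ⬝ᵥ P.mulVec v) := by
      rw [Matrix.add_mulVec, Matrix.add_mulVec, dotProduct_add, dotProduct_add,
        Matrix.smul_mulVec, dotProduct_smul, ← Matrix.mulVec_mulVec,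
        ← Matrix.mulVec_mulVec]
      have e2 : v ⬝ᵥ Jᵀ.mulVec (P.mulVec v) = v ⬝ᵥ P.mulVec (J.mulVec v) := by
        rw [Matrix.dotProduct_mulVec v Jᵀ, Matrix.vecMul_transpose,
          Matrix.dotProduct_mulVec v P, ← Matrix.transpose_transpose P,
          Matrix.vecMul_transpose, Matrix.transpose_transpose, posdef_transpose_eq hP,
          dotProduct_comm]
      rw [e2]; ring_nf
    have hnn : 0 ≤ (2*lam) * (v ⬝ᵥ P.mulVec v) := by
      have h0 : 0 ≤ v ⬝ᵥ P.mulVec v := by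
        have := hP.posSemidef.dotProduct_mulVec_nonneg v
        simpa using this
      positivity
    nlinarith [h, e1]
  have hφ : ∀ s : ℝ, HasDerivAt (fun s => v ⬝ᵥ P.mulVec (f (b + s • v)))
      (v ⬝ᵥ P.mulVec ((jacobianMatrix f (b + s • v)).mulVec v)) s := by
    intro s
    have hline : HasDerivAt (fun s : ℝ => b + s • v) v s := by
      simpa using ((hasDerivAt_id s).smul_const v).const_add b
    have hcomp : HasDerivAt (fun s : ℝ => f (b + s • v)) (fderiv ℝ f (b + s • v) v) s :=
      (hf.differentiable one_ne_zero _).hasFDerivAt.comp_hasDerivAt s hline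
    rw [jac_mulVec']
    exact hasDerivAt_dot_mulVec' P v hcomp
  set φ := fun s : ℝ => v ⬝ᵥ P.mulVec (f (b + s • v)) with hφdef
  have hψ : ∀ s : ℝ, HasDerivAt (fun s => 2 * φ s + ε * (v ⬝ᵥ v) * s)
      (2 * (v ⬝ᵥ P.mulVec ((jacobianMatrix f (b + s • v)).mulVec v)) + ε * (v ⬝ᵥ v)) s := by
    intro s
    simpa [Pi.add_def] using ((hφ s).const_mul 2).add ((hasDerivAt_id s).const_mul (ε * (v ⬝ᵥ v)))
  have hanti : Antitone (fun s => 2 * φ s + ε * (v ⬝ᵥ v) * s) := by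
    refine antitone_of_deriv_nonpos (fun s => (hψ s).differentiableAt) (fun s => ?_)
    rw [(hψ s).deriv]
    have := hpt (b + s • v)
    nlinarith
  have h01 := hanti (by norm_num : (0:ℝ) ≤ 1)
  have hφ1 : φ 1 = v ⬝ᵥ P.mulVec (f a) := by
    simp [hφdef, hvdef]
  have hφ0 : φ 0 = v ⬝ᵥ P.mulVec (f b) := by simp [hφdef]
  have : v ⬝ᵥ P.mulVec (f a - f b) = φ 1 - φ 0 := by
    rw [hφ1, hφ0, Matrix.mulVec_sub, dotProduct_sub]
  rw [this]
  simp only at h01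
  linarith

/-- Theorem 1, case `p = 0`. For a `0`-dominant system (positive definite
certificate `P`, rate `λ ≥ 0`), every bounded solution converges to a zero of `f`, and `f`
has at most one zero; hence all bounded solutions converge to the same unique fixed point. -/
theorem zero_dominant_bounded_solutions_converge
    {n : ℕ} (f : (Fin n → ℝ) → (Fin n → ℝ)) (hf : ContDiff ℝ 1 f)
    (P : Matrix (Fin n) (Fin n) ℝ) (hP : P.PosDef)
    (lam ε : ℝ) (hlam : 0 ≤ lam) (hε : 0 < ε)
    (hLMI : ∀ ξ : Fin n → ℝ, ∀ v : Fin n → ℝ,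
      v ⬝ᵥ (((jacobianMatrix f ξ)ᵀ * P + P * jacobianMatrix f ξ +
        (2 * lam) • P).mulVec v) ≤ -ε * (v ⬝ᵥ v))
    (x : ℝ → (Fin n → ℝ))
    (hx : ∀ t, 0 ≤ t → HasDerivAt x (f (x t)) t)
    (hbounded : Bornology.IsBounded (x '' Set.Ici 0)) :
    (∃ ξe : Fin n → ℝ, f ξe = 0 ∧ Tendsto x atTop (nhds ξe)) ∧
    (∀ a b : Fin n → ℝ, f a = 0 → f b = 0 → a = b) := by
  have hkey := key_increment f hf P hP lam ε hlam hε hLMI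
  -- uniqueness of zeros
  have huniq : ∀ a b : Fin n → ℝ, f a = 0 → f b = 0 → a = b := by
    intro a b ha hb
    have h := hkey a b
    rw [ha, hb] at h
    simp only [sub_zero, Matrix.mulVec_zero, dotProduct_zero, mul_zero] at h
    have h2 : (a - b) ⬝ᵥ (a - b) ≤ 0 := by nlinarith
    have h3 : a - b = 0 :=
      dotProduct_self_eq_zero.mp (le_antisymm h2 (dot_self_nonneg' _))
    exact sub_eq_zero.mp h3
  refine ⟨?_, huniq⟩
  rcases Nat.eq_zero_or_pos n with hn | hn
  · subst hn
    refine ⟨0, Subsingleton.elim _ _, ?_⟩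
    have : x = fun _ => 0 := funext fun t => Subsingleton.elim _ _
    rw [this]
    exact tendsto_const_nhds
  obtain ⟨m, M, hm, hM, hbound⟩ := quad_bounds' hn P hP
  -- a bound on the trajectory
  obtain ⟨R, hR⟩ := hbounded.subset_closedBall 0
  have hnorm : ∀ t : ℝ, 0 ≤ t → ‖x t‖ ≤ R := by
    intro t ht
    have := hR ⟨t, ht, rfl⟩
    simpa [dist_zero_right] using this
  set R' := max R 0 with hR'def
  have hR'0 : 0 ≤ R' := le_max_right _ _
  set K0 := (n : ℝ) * ((2 * R') * (2 * R')) with hK0def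
  have hK0nn : 0 ≤ K0 := by positivity
  have hD : ∀ h : ℝ, 0 ≤ h → (x h - x 0) ⬝ᵥ (x h - x 0) ≤ K0 := by
    intro h hh
    have hcoord : ∀ i, (x h - x 0) i * (x h - x 0) i ≤ (2 * R') * (2 * R') := by
      intro i
      have h1 : |(x h - x 0) i| ≤ 2 * R' := by
        have h2 : ‖(x h - x 0) i‖ ≤ ‖x h - x 0‖ := norm_le_pi_norm _ i
        have h3 : ‖x h - x 0‖ ≤ ‖x h‖ + ‖x 0‖ := norm_sub_le _ _
        have h4 := hnorm h hh
        have h5 := hnorm 0 le_rfl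
        have h6 : R ≤ R' := le_max_left _ _
        rw [Real.norm_eq_abs] at h2
        linarith
      have := abs_nonneg ((x h - x 0) i)
      rw [abs_le] at h1
      nlinarith
    calc (x h - x 0) ⬝ᵥ (x h - x 0) = ∑ i, (x h - x 0) i * (x h - x 0) i := rfl
    _ ≤ ∑ _i : Fin n, (2 * R') * (2 * R') := Finset.sum_le_sum fun i _ => hcoord i
    _ = K0 := by simp [hK0def]
  set c := ε / M with hcdef
  have hcpos : 0 < c := div_pos hε hM
  -- the exponential decay estimate
  have hdecay : ∀ h : ℝ, 0 ≤ h → ∀ t : ℝ, 0 ≤ t →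
      (x (t + h) - x t) ⬝ᵥ P.mulVec (x (t + h) - x t)
        ≤ M * K0 * Real.exp (-(c * t)) := by
    intro h hh
    set u := fun t : ℝ => x (t + h) - x t with hudef
    set W := fun t : ℝ => u t ⬝ᵥ P.mulVec (u t) with hWdef
    have hu : ∀ t : ℝ, 0 ≤ t → HasDerivAt u (f (x (t + h)) - f (x t)) t := by
      intro t ht
      have h1 : HasDerivAt (fun s : ℝ => x (s + h)) (f (x (t + h))) t := by
        have := (hx (t + h) (by linarith)).scomp t ((hasDerivAt_id t).add_const h)
        simpa [Function.comp_def] using this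
      exact h1.sub (hx t ht)
    have hWd : ∀ t : ℝ, 0 ≤ t →
        HasDerivAt W (2 * (u t ⬝ᵥ P.mulVec (f (x (t + h)) - f (x t)))) t := by
      intro t ht
      have h1 := hasDerivAt_quadForm' P (hu t ht)
      have e : (f (x (t + h)) - f (x t)) ⬝ᵥ P.mulVec (u t)
          + u t ⬝ᵥ P.mulVec (f (x (t + h)) - f (x t))
          = 2 * (u t ⬝ᵥ P.mulVec (f (x (t + h)) - f (x t))) := by
        rw [posdef_dot_symm hP]; ring
      rw [e] at h1
      exact h1
    set g := fun t : ℝ => W t * Real.exp (c * t) with hgdef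
    have hexp : ∀ t : ℝ, HasDerivAt (fun t : ℝ => Real.exp (c * t))
        (Real.exp (c * t) * c) t := by
      intro t
      have := HasDerivAt.exp ((hasDerivAt_id t).const_mul c)
      simpa using this
    have hgd : ∀ t : ℝ, 0 ≤ t → HasDerivAt g
        (2 * (u t ⬝ᵥ P.mulVec (f (x (t + h)) - f (x t))) * Real.exp (c * t)
          + W t * (Real.exp (c * t) * c)) t := by
      intro t ht
      exact (hWd t ht).mul (hexp t)
    have hcont : ContinuousOn g (Set.Ici 0) := fun t ht =>
      ((hgd t ht).continuousAt).continuousWithinAt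
    have hderiv_nonpos : ∀ t ∈ interior (Set.Ici (0:ℝ)), deriv g t ≤ 0 := by
      intro t ht
      rw [interior_Ici] at ht
      have ht' : (0:ℝ) ≤ t := le_of_lt ht
      rw [(hgd t ht').deriv]
      have h1 : 2 * (u t ⬝ᵥ P.mulVec (f (x (t + h)) - f (x t))) ≤ -ε * (u t ⬝ᵥ u t) :=
        hkey (x (t + h)) (x t)
      have h2 : W t ≤ M * (u t ⬝ᵥ u t) := (hbound (u t)).2
      have h3 : (0:ℝ) < Real.exp (c * t) := Real.exp_pos _
      have h4 : W t * c ≤ ε * (u t ⬝ᵥ u t) := by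
        have h5 := mul_le_mul_of_nonneg_right h2 hcpos.le
        have h6 : M * (u t ⬝ᵥ u t) * c = ε * (u t ⬝ᵥ u t) := by
          rw [hcdef]
          field_simp
        linarith
      have hsum : 2 * (u t ⬝ᵥ P.mulVec (f (x (t + h)) - f (x t))) + W t * c ≤ 0 := by
        linarith
      calc 2 * (u t ⬝ᵥ P.mulVec (f (x (t + h)) - f (x t))) * Real.exp (c * t)
            + W t * (Real.exp (c * t) * c)
          = (2 * (u t ⬝ᵥ P.mulVec (f (x (t + h)) - f (x t))) + W t * c)
            * Real.exp (c * t) := by ring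
        _ ≤ 0 := mul_nonpos_of_nonpos_of_nonneg hsum h3.le
    have hdiff : DifferentiableOn ℝ g (interior (Set.Ici (0:ℝ))) := by
      intro t ht
      rw [interior_Ici] at ht
      exact ((hgd t ht.le).differentiableAt).differentiableWithinAt
    have hanti : AntitoneOn g (Set.Ici 0) :=
      antitoneOn_of_deriv_nonpos (convex_Ici 0) hcont hdiff hderiv_nonpos
    intro t ht
    have hgle : g t ≤ g 0 := hanti (Set.mem_Ici.mpr le_rfl) (Set.mem_Ici.mpr ht) ht
    have hg0 : g 0 = W 0 := by simp [hgdef]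
    have hW0 : W 0 ≤ M * K0 := by
      have h1 : W 0 = (x h - x 0) ⬝ᵥ P.mulVec (x h - x 0) := by
        simp [hWdef, hudef]
      have h2 := (hbound (x h - x 0)).2
      have h3 := hD h hh
      rw [h1]
      calc (x h - x 0) ⬝ᵥ P.mulVec (x h - x 0) ≤ M * ((x h - x 0) ⬝ᵥ (x h - x 0)) := h2
      _ ≤ M * K0 := mul_le_mul_of_nonneg_left h3 hM.le
    have h7 : W t * Real.exp (c * t) ≤ M * K0 := by
      have hle : g t ≤ W 0 := hg0 ▸ hgle
      calc W t * Real.exp (c * t) = g t := rfl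
      _ ≤ W 0 := hle
      _ ≤ M * K0 := hW0
    have h8 : (0:ℝ) < Real.exp (c * t) := Real.exp_pos _
    have h9 := mul_le_mul_of_nonneg_right h7 (Real.exp_pos (-(c * t))).le
    have h10 : W t * Real.exp (c * t) * Real.exp (-(c * t)) = W t := by
      rw [mul_assoc, ← Real.exp_add]
      simp
    rw [h10] at h9
    exact h9
  -- Cauchy property
  have hcauchy : CauchySeq x := by
    rw [Metric.cauchySeq_iff']
    intro δ hδ
    have htend : Tendsto (fun t : ℝ => M * K0 * Real.exp (-(c * t))) atTop (nhds 0) := by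
      have h1 : Tendsto (fun t : ℝ => c * t) atTop atTop :=
        Tendsto.const_mul_atTop hcpos tendsto_id
      have h2 : Tendsto (fun t : ℝ => Real.exp (-(c * t))) atTop (nhds 0) :=
        Real.tendsto_exp_neg_atTop_nhds_zero.comp h1
      have := h2.const_mul (M * K0)
      simpa using this
    have hev : ∀ᶠ t in atTop, M * K0 * Real.exp (-(c * t)) < m * (δ * δ) :=
      htend.eventually (gt_mem_nhds (by positivity))
    obtain ⟨T, hT⟩ := (hev.and (eventually_ge_atTop (0:ℝ))).exists
    refine ⟨T, fun t ht => ?_⟩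
    have h0T : (0:ℝ) ≤ T := hT.2
    have hw := hdecay (t - T) (by linarith) T h0T
    rw [show T + (t - T) = t by ring] at hw
    set d := x t - x T with hddef
    have hum : m * (d ⬝ᵥ d) ≤ d ⬝ᵥ P.mulVec d := (hbound d).1
    have hdd : d ⬝ᵥ d < δ * δ := by
      have h1 : m * (d ⬝ᵥ d) < m * (δ * δ) := by
        calc m * (d ⬝ᵥ d) ≤ d ⬝ᵥ P.mulVec d := hum
        _ ≤ M * K0 * Real.exp (-(c * T)) := hw
        _ < m * (δ * δ) := hT.1
      exact lt_of_mul_lt_mul_left h1 hm.le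
    rw [dist_pi_lt_iff hδ]
    intro i
    have h1 : d i * d i < δ * δ := lt_of_le_of_lt (coord_sq_le_dot' d i) hdd
    have h2 : |d i| < δ := by
      rw [abs_lt]
      constructor <;> nlinarith
    have h3 : x t i - x T i = d i := by simp [hddef]
    rw [Real.dist_eq, h3]
    exact h2
  obtain ⟨ξe, hξe⟩ := cauchySeq_tendsto_of_complete hcauchy
  refine ⟨ξe, ?_, hξe⟩
  -- the limit is a zero of f
  funext i
  show f ξe i = (0 : Fin n → ℝ) i
  rw [Pi.zero_apply]
  have hc : ∀ k : ℕ, ∃ cp ∈ Set.Ioo (k:ℝ) ((k:ℝ)+1),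
      f (x cp) i = (x ((k:ℝ)+1) i - x (k:ℝ) i) / ((k:ℝ)+1 - (k:ℝ)) := by
    intro k
    refine exists_hasDerivAt_eq_slope (fun t => x t i) (fun t => f (x t) i)
      (by linarith : (k:ℝ) < (k:ℝ)+1) ?_ ?_
    · intro t ht
      have ht0 : (0:ℝ) ≤ t := le_trans (Nat.cast_nonneg k) ht.1
      exact ((hasDerivAt_pi.1 (hx t ht0) i).continuousAt).continuousWithinAt
    · intro t ht
      have ht0 : (0:ℝ) ≤ t := le_trans (Nat.cast_nonneg k) ht.1.le
      exact hasDerivAt_pi.1 (hx t ht0) i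
  choose cseq hc1 hc2 using hc
  have hck : Tendsto cseq atTop atTop :=
    tendsto_atTop_mono (fun k => (hc1 k).1.le) tendsto_natCast_atTop_atTop
  have hfx : Tendsto (fun t : ℝ => f (x t) i) atTop (nhds (f ξe i)) := by
    have h1 : Tendsto (f ∘ x) atTop (nhds (f ξe)) :=
      (hf.continuous.tendsto ξe).comp hξe
    exact ((continuous_apply i).tendsto (f ξe)).comp h1
  have hL : Tendsto (fun k : ℕ => f (x (cseq k)) i) atTop (nhds (f ξe i)) :=
    hfx.comp hck
  have hR : Tendsto (fun k : ℕ => x ((k:ℝ)+1) i - x (k:ℝ) i) atTop (nhds 0) := by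
    have hxi : Tendsto (fun t : ℝ => x t i) atTop (nhds (ξe i)) :=
      ((continuous_apply i).tendsto ξe).comp hξe
    have h1 : Tendsto (fun k : ℕ => x ((k:ℝ)+1) i) atTop (nhds (ξe i)) :=
      hxi.comp (tendsto_atTop_add_const_right atTop 1 tendsto_natCast_atTop_atTop)
    have h2 : Tendsto (fun k : ℕ => x (k:ℝ) i) atTop (nhds (ξe i)) :=
      hxi.comp tendsto_natCast_atTop_atTop
    simpa using h1.sub h2
  have heq : (fun k : ℕ => f (x (cseq k)) i)
      = fun k : ℕ => x ((k:ℝ)+1) i - x (k:ℝ) i := by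
    funext k
    have := hc2 k
    simpa using this
  rw [heq] at hL
  exact tendsto_nhds_unique hL hR
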